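/- For λ = 1/√r and for λ = −1/√r, the solution space of the characteristic (wave) system, S_λ = {(δn, δT, δU) ∈ ℝ × ℝ × ℝ⁴ : η(U, δU) = 0, equations (E1) and (E2) hold}, is a linear subspace of ℝ⁶ of dimension exactly 1; its elements satisfy δn/n = r · δT/T and δU = (−c/(λ n r)) δn · ν. -/

import Mathlib

open MeasureTheory Real Filter Set

/-- The Minkowski bilinear form on `ℝ⁴`. -/
def eta (x y : Fin 4 → ℝ) : ℝ :=
  x 0 * y 0 - x 1 * y 1 - x 2 * y 2 - x 3 * y 3

/-- The characteristic (wave) system of the relativistic Euler equations with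
energy `e = r·p`, for the characteristic speed `lam` (in light speed units), in the
unknowns `v = (δn, δT, δU)`, including the linearized constraint `η(U, δU) = 0`. -/
def WaveSol (c n T r lam : ℝ) (U ν : Fin 4 → ℝ) (v : ℝ × ℝ × (Fin 4 → ℝ)) : Prop :=
  eta U v.2.2 = 0 ∧
  -- (E1)
  (-(lam * c) * v.1 + n * eta ν v.2.2 = 0) ∧
  -- (E2)
  (∀ β : Fin 4,
    -(ν β) * (T * v.1 + n * v.2.1) + n * T * ((r + 1) / c ^ 2) * U β * eta ν v.2.2
      - (lam / c) * (r * U β * (T * v.1 + n * v.2.1) + n * T * (r + 1) * v.2.2 β) = 0)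

/-- For `λ = ±1/√r` the solution space of the characteristic system is a linear
subspace of dimension exactly `1`, and its elements satisfy `δn/n = r δT/T` and
`δU = (-c/(λ n r)) δn · ν`. -/
theorem wave_system_sound_speeds (c n T r : ℝ) (hc : 0 < c) (hn : 0 < n) (hT : 0 < T)
    (hr : 0 < r) (U ν : Fin 4 → ℝ) (hU : eta U U = c ^ 2) (hν : eta ν ν = -1)
    (hUν : eta U ν = 0) (lam : ℝ)
    (hlam : lam = 1 / Real.sqrt r ∨ lam = -(1 / Real.sqrt r)) :
    (∃ S : Submodule ℝ (ℝ × ℝ × (Fin 4 → ℝ)),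
      (S : Set (ℝ × ℝ × (Fin 4 → ℝ))) = {v | WaveSol c n T r lam U ν v} ∧
      Module.finrank ℝ S = 1) ∧
    ∀ v : ℝ × ℝ × (Fin 4 → ℝ), WaveSol c n T r lam U ν v →
      v.1 / n = r * (v.2.1 / T) ∧ v.2.2 = (-c / (lam * n * r) * v.1) • ν := by
  have hc0 : c ≠ 0 := ne_of_gt hc
  have hn0 : n ≠ 0 := ne_of_gt hn
  have hT0 : T ≠ 0 := ne_of_gt hT
  have hr0 : r ≠ 0 := ne_of_gt hr
  have hr1 : r + 1 ≠ 0 := by positivity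
  have hlr : lam ^ 2 * r = 1 := by
    have hs : Real.sqrt r ^ 2 = r := Real.sq_sqrt hr.le
    have hs0 : Real.sqrt r ≠ 0 := by positivity
    rcases hlam with h | h <;> rw [h] <;> field_simp <;> linarith [hs]
  have hlam0 : lam ≠ 0 := by
    intro h; rw [h] at hlr; norm_num at hlr
  have hν' : ν 0 * ν 0 - ν 1 * ν 1 - ν 2 * ν 2 - ν 3 * ν 3 = -1 := hν
  have hUν' : U 0 * ν 0 - U 1 * ν 1 - U 2 * ν 2 - U 3 * ν 3 = 0 := hUν
  have hU' : U 0 * U 0 - U 1 * U 1 - U 2 * U 2 - U 3 * U 3 = c ^ 2 := hU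
  set w : ℝ × ℝ × (Fin 4 → ℝ) := (lam * n * r, lam * T, (-c) • ν) with hw
  have key : ∀ v : ℝ × ℝ × (Fin 4 → ℝ),
      WaveSol c n T r lam U ν v ↔ ∃ t : ℝ, t • w = v := by
    rintro ⟨a, b, u⟩
    constructor
    · rintro ⟨h0, h1, h2⟩
      simp only at h0 h1 h2
      have h0' : U 0 * u 0 - U 1 * u 1 - U 2 * u 2 - U 3 * u 3 = 0 := h0
      set E := eta ν u with hEdef
      set A := T * a + n * b with hA
      have h2' : ∀ β : Fin 4, (-(ν β * A * c ^ 2) + n * T * (r + 1) * U β * E) * c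
          - c ^ 2 * (lam * (r * U β * A + n * T * (r + 1) * u β)) = 0 := by
        intro β
        have h := h2 β
        field_simp at h
        linear_combination c * h
      have hE : n * T * (r + 1) * E = lam * c * r * A := by
        have h6 : c ^ 3 * (n * T * (r + 1) * E - lam * c * r * A) = 0 := by
          linear_combination (U 0) * h2' 0 - (U 1) * h2' 1 - (U 2) * h2' 2 - (U 3) * h2' 3
            + (c ^ 3 * A) * hUν'
            - (c * n * T * (r + 1) * E - c ^ 2 * lam * r * A) * hU'
            + (c ^ 2 * lam * n * T * (r + 1)) * h0'
        have := (mul_eq_zero.mp h6).resolve_left (pow_ne_zero 3 hc0)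
        linarith
      have hE1 : n * E = lam * c * a := by linear_combination h1
      have h5 : lam * (c * n) * (r * A - T * (r + 1) * a) = 0 := by
        linear_combination (-n) * hE + n * T * (r + 1) * hE1
      have h4 : r * A = T * (r + 1) * a := by
        have hne : lam * (c * n) ≠ 0 := mul_ne_zero hlam0 (mul_ne_zero hc0 hn0)
        have := (mul_eq_zero.mp h5).resolve_left hne
        linarith
      have hb : T * a = r * n * b := by linear_combination r * hA - h4
      -- per-component formula for u
      have hu : ∀ β : Fin 4, lam * n * r * u β = -(c * a * ν β) := by
        intro β
        have h7 : (c ^ 2 * T * (r + 1)) * (lam * n * r * u β + c * a * ν β) = 0 := by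
          linear_combination (-r) * h2' β + (r * c * U β) * hE - (c ^ 3 * ν β) * h4
        have h8 := (mul_eq_zero.mp h7).resolve_left (by positivity)
        linarith
      refine ⟨a / (lam * n * r), ?_⟩
      rw [hw]
      refine Prod.ext ?_ (Prod.ext ?_ ?_)
      · simp only [Prod.smul_mk, smul_eq_mul]
        field_simp
      · simp only [Prod.smul_mk, smul_eq_mul]
        field_simp
        linear_combination hb
      · simp only [Prod.smul_mk]
        funext β
        simp only [Pi.smul_apply, smul_eq_mul]
        have h9 := hu β
        field_simp
        linear_combination -h9
    · rintro ⟨t, ht⟩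
      rw [← ht]
      refine ⟨?_, ?_, ?_⟩
      · simp only [hw, Prod.smul_mk, smul_eq_mul, Pi.smul_apply, eta]
        linear_combination (t * (-c)) * hUν'
      · simp only [hw, Prod.smul_mk, smul_eq_mul, Pi.smul_apply, eta]
        linear_combination (n * t * (-c)) * hν' - (n * c * t) * hlr
      · intro β
        simp only [hw, Prod.smul_mk, smul_eq_mul, Pi.smul_apply, eta]
        field_simp
        linear_combination (-(T * t * n * (r + 1) * U β)) * hν'
          - (T * t * n * (r + 1) * U β) * hlr
  refine ⟨⟨Submodule.span ℝ {w}, ?_, ?_⟩, ?_⟩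
  · ext v
    rw [SetLike.mem_coe, Submodule.mem_span_singleton]
    exact (key v).symm
  · apply finrank_span_singleton
    intro h
    have := congrArg Prod.fst h
    simp only [hw, Prod.fst] at this
    exact (mul_ne_zero (mul_ne_zero hlam0 hn0) hr0) this
  · intro v hv
    obtain ⟨t, ht⟩ := (key v).mp hv
    rw [← ht]
    constructor
    · simp only [hw, Prod.smul_mk, smul_eq_mul]
      field_simp
    · simp only [hw, Prod.smul_mk, smul_eq_mul]
      funext β
      simp only [Pi.smul_apply, smul_eq_mul]
      field_simp
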